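/- Assign weights w(y₁) = 2, w(y₂) = 3, w(y₃) = 4. Then F = (−y₂² − y₁y₃)·q(y₁, y₂, y₃, −y₂² − y₁y₃) + y₃²·l(y₁, y₂, y₃, −y₂² − y₁y₃) + y₃·q′(y₂, y₃, −y₂² − y₁y₃), where q, q′ are arbitrary homogeneous quadratics and l an arbitrary linear form in the indicated variables, has weighted multiplicity at least 10 at the origin. -/

import Mathlib

open MvPolynomial

namespace Stmt15Aux

def D (m : Fin 3 →₀ ℕ) : ℕ := 2 * m 0 + 3 * m 1 + 4 * m 2

def P (n : ℕ) (p : MvPolynomial (Fin 3) ℂ) : Prop := ∀ m ∈ p.support, n ≤ D m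

lemma D_add (a b : Fin 3 →₀ ℕ) : D (a + b) = D a + D b := by
  simp only [D, Finsupp.add_apply]; ring

lemma P_mono {n k : ℕ} {p : MvPolynomial (Fin 3) ℂ} (h : P n p) (hk : k ≤ n) : P k p :=
  fun m hm => hk.trans (h m hm)

lemma P_zero (n : ℕ) : P n 0 := by intro m hm; simp at hm

lemma P_add {n : ℕ} {p q : MvPolynomial (Fin 3) ℂ} (hp : P n p) (hq : P n q) :
    P n (p + q) := by
  intro m hm
  rcases Finset.mem_union.mp (Finsupp.support_add hm) with h | h
  exacts [hp m h, hq m h]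

lemma P_neg {n : ℕ} {p : MvPolynomial (Fin 3) ℂ} (hp : P n p) : P n (-p) := by
  intro m hm
  apply hp
  simpa [MvPolynomial.support_neg] using hm

lemma P_mul {a b : ℕ} {p q : MvPolynomial (Fin 3) ℂ} (hp : P a p) (hq : P b q) :
    P (a + b) (p * q) := by
  intro m hm
  rcases Finset.mem_add.mp (MvPolynomial.support_mul p q hm) with ⟨m1, h1, m2, h2, rfl⟩
  rw [D_add]
  exact Nat.add_le_add (hp m1 h1) (hq m2 h2)

lemma P_pow {a : ℕ} {p : MvPolynomial (Fin 3) ℂ} (hp : P a p) :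
    ∀ n : ℕ, P (n * a) (p ^ n)
  | 0 => fun m _ => by simp
  | n + 1 => by
      rw [pow_succ, Nat.succ_mul]
      exact P_mul (P_pow hp n) hp

lemma P_X0 : P 2 (X 0 : MvPolynomial (Fin 3) ℂ) := by
  intro m hm
  rw [MvPolynomial.support_X, Finset.mem_singleton] at hm
  subst hm; simp [D]

lemma P_X1 : P 3 (X 1 : MvPolynomial (Fin 3) ℂ) := by
  intro m hm
  rw [MvPolynomial.support_X, Finset.mem_singleton] at hm
  subst hm; simp [D]

lemma P_X2 : P 4 (X 2 : MvPolynomial (Fin 3) ℂ) := by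
  intro m hm
  rw [MvPolynomial.support_X, Finset.mem_singleton] at hm
  subst hm; simp [D]

lemma P_sub6 : P 6 ((-(X 1) ^ 2 - X 0 * X 2 : MvPolynomial (Fin 3) ℂ)) := by
  have h1 : P 6 ((X 1 : MvPolynomial (Fin 3) ℂ) ^ 2) := by
    have := P_pow P_X1 2; simpa using this
  have h2 : P 6 ((X 0 : MvPolynomial (Fin 3) ℂ) * X 2) := by
    have := P_mul P_X0 P_X2; simpa using this
  have : P 6 ((-(X 1 : MvPolynomial (Fin 3) ℂ) ^ 2) + -(X 0 * X 2)) :=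
    P_add (P_neg h1) (P_neg h2)
  simpa [sub_eq_add_neg] using this

lemma P_sum {ι : Type*} {s : Finset ι} {n : ℕ} {g : ι → MvPolynomial (Fin 3) ℂ}
    (h : ∀ i ∈ s, P n (g i)) : P n (∑ i ∈ s, g i) := by
  classical
  induction s using Finset.induction with
  | empty => simpa using P_zero n
  | insert _ _ hx ih =>
      rw [Finset.sum_insert hx]
      exact P_add (h _ (Finset.mem_insert_self _ _))
        (ih fun i hi => h i (Finset.mem_insert_of_mem hi))

lemma P_prod {ι : Type*} {s : Finset ι} {g : ι → MvPolynomial (Fin 3) ℂ} {n : ι → ℕ}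
    (h : ∀ i ∈ s, P (n i) (g i)) : P (∑ i ∈ s, n i) (∏ i ∈ s, g i) := by
  classical
  induction s using Finset.induction with
  | empty => intro m _; simp
  | insert _ _ hx ih =>
      rw [Finset.sum_insert hx, Finset.prod_insert hx]
      exact P_mul (h _ (Finset.mem_insert_self _ _))
        (ih fun i hi => h i (Finset.mem_insert_of_mem hi))

lemma P_aeval {k : ℕ} {a d : ℕ} (f : Fin k → MvPolynomial (Fin 3) ℂ)
    (hf : ∀ i, P a (f i)) (q : MvPolynomial (Fin k) ℂ) (hq : q.IsHomogeneous d) :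
    P (a * d) (aeval f q) := by
  rw [aeval_def, eval₂_eq]
  apply P_sum
  intro m hm
  have hc : coeff m q ≠ 0 := MvPolynomial.mem_support_iff.mp hm
  have hdeg : ∑ i ∈ m.support, m i = d := by
    have := hq hc
    rw [← this]
    simp [Finsupp.weight_apply, Finsupp.sum]
  have hP : P (∑ i ∈ m.support, a * (m i)) (∏ i ∈ m.support, f i ^ m i) := by
    apply P_prod
    intro i _
    have := P_pow (hf i) (m i)
    rwa [Nat.mul_comm] at this
  have : P (0 + ∑ i ∈ m.support, a * (m i))
      (algebraMap ℂ (MvPolynomial (Fin 3) ℂ) (coeff m q) * ∏ i ∈ m.support, f i ^ m i) :=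
    P_mul (fun m' _ => Nat.zero_le _) hP
  rw [Nat.zero_add, ← Finset.mul_sum, hdeg] at this
  exact this

end Stmt15Aux

open Stmt15Aux in
theorem stmt_15 (q : MvPolynomial (Fin 4) ℂ) (hq : q.IsHomogeneous 2)
    (l : MvPolynomial (Fin 4) ℂ) (hl : l.IsHomogeneous 1)
    (q' : MvPolynomial (Fin 3) ℂ) (hq' : q'.IsHomogeneous 2) :
    ∀ m ∈ (((-(X 1) ^ 2 - X 0 * X 2) *
            aeval ![X 0, X 1, X 2, -(X 1) ^ 2 - X 0 * X 2] q
        + X 2 ^ 2 * aeval ![X 0, X 1, X 2, -(X 1) ^ 2 - X 0 * X 2] l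
        + X 2 * aeval ![X 1, X 2, -(X 1) ^ 2 - X 0 * X 2] q' :
        MvPolynomial (Fin 3) ℂ)).support,
      10 ≤ 2 * m 0 + 3 * m 1 + 4 * m 2 := by
  have hf4 : ∀ i : Fin 4,
      P 2 (![X 0, X 1, X 2, -(X 1) ^ 2 - X 0 * X 2] i : MvPolynomial (Fin 3) ℂ) := by
    intro i
    fin_cases i
    · simpa using P_X0
    · simpa using P_mono P_X1 (by norm_num)
    · simpa using P_mono P_X2 (by norm_num)
    · simpa using P_mono P_sub6 (by norm_num)
  have hf3 : ∀ i : Fin 3,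
      P 3 (![X 1, X 2, -(X 1) ^ 2 - X 0 * X 2] i : MvPolynomial (Fin 3) ℂ) := by
    intro i
    fin_cases i
    · simpa using P_X1
    · simpa using P_mono P_X2 (by norm_num)
    · simpa using P_mono P_sub6 (by norm_num)
  have h1 : P 10 ((-(X 1) ^ 2 - X 0 * X 2) *
      aeval ![X 0, X 1, X 2, -(X 1) ^ 2 - X 0 * X 2] q : MvPolynomial (Fin 3) ℂ) := by
    have := P_mul P_sub6 (P_aeval _ hf4 q hq)
    simpa using this
  have h2 : P 10 ((X 2 : MvPolynomial (Fin 3) ℂ) ^ 2 *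
      aeval ![X 0, X 1, X 2, -(X 1) ^ 2 - X 0 * X 2] l) := by
    have := P_mul (P_pow P_X2 2) (P_aeval _ hf4 l hl)
    simpa using this
  have h3 : P 10 ((X 2 : MvPolynomial (Fin 3) ℂ) *
      aeval ![X 1, X 2, -(X 1) ^ 2 - X 0 * X 2] q') := by
    have := P_mul P_X2 (P_aeval _ hf3 q' hq')
    simpa using this
  have := P_add (P_add h1 h2) h3
  intro m hm
  exact this m hm
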